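/- arXiv:0907.2337 — 4 statements merged into one kernel-verified Lean document; each statement's English description precedes it below -/
import Mathlib

section
/- If θ̄ ∈ ℝ^{p−1} and θ̃ ∈ ℝ^{p−1} are both global minimizers of F, then the weighted score vectors coincide at the two minimizers: Σ_{t∈T} w_t ∇γ(θ̄; x^t) = Σ_{t∈T} w_t ∇γ(θ̃; x^t), where ∇γ(θ; x) = (x_u − tanh(⟨θ, x_{\u}⟩)) · x_{\u}. -/
open Real Set Finset Filter Topology

noncomputable def lse (s : ℝ) : ℝ := Real.log (Real.exp s + Real.exp (-s))

lemma exp_add_exp_pos (s : ℝ) : 0 < Real.exp s + Real.exp (-s) := by positivity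

lemma hasDerivAt_lse (s : ℝ) : HasDerivAt lse (Real.tanh s) s := by
  have h1 : HasDerivAt (fun s : ℝ => Real.exp s + Real.exp (-s))
      (Real.exp s - Real.exp (-s)) s := by
    have := (Real.hasDerivAt_exp s).add
      (((Real.hasDerivAt_exp (-s)).comp s (hasDerivAt_neg s)))
    exact this.congr_deriv (by ring)
  have := h1.log (exp_add_exp_pos s).ne'
  convert this using 1
  · rfl
  rw [Real.tanh_eq_sinh_div_cosh, Real.sinh_eq, Real.cosh_eq]
  field_simp

lemma hasDerivAt_tanh (s : ℝ) : HasDerivAt Real.tanh (1 / Real.cosh s ^ 2) s := by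
  have h : HasDerivAt (fun x : ℝ => Real.sinh x / Real.cosh x)
      ((Real.cosh s * Real.cosh s - Real.sinh s * Real.sinh s) / Real.cosh s ^ 2) s :=
    (Real.hasDerivAt_sinh s).div (Real.hasDerivAt_cosh s) (Real.cosh_pos s).ne'
  have he : (fun x : ℝ => Real.sinh x / Real.cosh x) = Real.tanh := by
    funext x; rw [Real.tanh_eq_sinh_div_cosh]
  rw [he] at h
  convert h using 1
  have := Real.cosh_sq_sub_sinh_sq s
  field_simp
  nlinarith [Real.cosh_pos s]

section core
variable {ι : Type} [Fintype ι]

lemma hasDerivAt_core (w a b c : ι → ℝ) (r : ℝ) :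
    HasDerivAt (fun r : ℝ => ∑ t, w t * (lse (a t + r * b t) - c t * (a t + r * b t)))
      (∑ t, w t * ((Real.tanh (a t + r * b t) - c t) * b t)) r := by
  apply HasDerivAt.fun_sum
  intro t _
  have haff : HasDerivAt (fun r : ℝ => a t + r * b t) (b t) r := by
    simpa using ((hasDerivAt_id r).mul_const (b t)).const_add (a t)
  have h1 : HasDerivAt (fun r : ℝ => lse (a t + r * b t)) (Real.tanh (a t + r * b t) * b t) r :=
    by have := (hasDerivAt_lse (a t + r * b t)).comp r haff; exact this
  have h2 := (h1.sub (haff.const_mul (c t))).const_mul (w t)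
  exact h2.congr_deriv (by ring)

lemma hasDerivAt_core' (w a b c : ι → ℝ) (r : ℝ) :
    HasDerivAt (fun r : ℝ => ∑ t, w t * ((Real.tanh (a t + r * b t) - c t) * b t))
      (∑ t, w t * (1 / Real.cosh (a t + r * b t) ^ 2 * b t * b t)) r := by
  apply HasDerivAt.fun_sum
  intro t _
  have haff : HasDerivAt (fun r : ℝ => a t + r * b t) (b t) r := by
    simpa using ((hasDerivAt_id r).mul_const (b t)).const_add (a t)
  have h1 : HasDerivAt (fun r : ℝ => Real.tanh (a t + r * b t))
      (1 / Real.cosh (a t + r * b t) ^ 2 * b t) r :=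
    by have := (hasDerivAt_tanh (a t + r * b t)).comp r haff; exact this
  exact (((h1.sub_const (c t)).mul_const (b t))).const_mul (w t)

lemma convexOn_core (w a b c : ι → ℝ) (hw : ∀ t, 0 ≤ w t) :
    ConvexOn ℝ Set.univ
      (fun r : ℝ => ∑ t, w t * (lse (a t + r * b t) - c t * (a t + r * b t))) := by
  have hd1 : deriv (fun r : ℝ => ∑ t, w t * (lse (a t + r * b t) - c t * (a t + r * b t)))
      = fun r => ∑ t, w t * ((Real.tanh (a t + r * b t) - c t) * b t) := by
    funext r; exact (hasDerivAt_core w a b c r).deriv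
  apply convexOn_univ_of_deriv2_nonneg
  · exact fun r => (hasDerivAt_core w a b c r).differentiableAt
  · rw [hd1]; exact fun r => (hasDerivAt_core' w a b c r).differentiableAt
  · intro r
    have : (deriv^[2] fun r : ℝ => ∑ t, w t * (lse (a t + r * b t) - c t * (a t + r * b t))) r
        = ∑ t, w t * (1 / Real.cosh (a t + r * b t) ^ 2 * b t * b t) := by
      show deriv (deriv _) r = _
      rw [hd1]
      exact (hasDerivAt_core' w a b c r).deriv
    rw [this]
    apply Finset.sum_nonneg
    intro t _
    have h1 : 1 / Real.cosh (a t + r * b t) ^ 2 * b t * b t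
        = b t ^ 2 / Real.cosh (a t + r * b t) ^ 2 := by ring
    rw [h1]
    have hc := Real.cosh_pos (a t + r * b t)
    exact mul_nonneg (hw t) (div_nonneg (sq_nonneg _) (le_of_lt (pow_pos hc 2)))

lemma convexOn_pen {κ : Type} [Fintype κ] (lam : ℝ) (hlam : 0 ≤ lam) (θ d : κ → ℝ) :
    ConvexOn ℝ Set.univ (fun r : ℝ => lam * ∑ v, |θ v + r * d v|) := by
  refine ⟨convex_univ, fun s _ t _ aa bb ha hb hab => ?_⟩
  simp only [smul_eq_mul]
  have key : ∀ v : κ, |θ v + (aa*s+bb*t)*d v| ≤ aa * |θ v + s*d v| + bb * |θ v + t*d v| := by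
    intro v
    have h : θ v + (aa*s+bb*t)*d v = aa*(θ v + s*d v) + bb*(θ v + t*d v) := by
      linear_combination (-(θ v)) * hab
    calc |θ v + (aa*s+bb*t)*d v| = |aa*(θ v + s*d v) + bb*(θ v + t*d v)| := by rw [h]
      _ ≤ |aa*(θ v + s*d v)| + |bb*(θ v + t*d v)| := abs_add_le _ _
      _ = aa*|θ v + s*d v| + bb*|θ v + t*d v| := by
          rw [abs_mul, abs_mul, abs_of_nonneg ha, abs_of_nonneg hb]
  calc lam * ∑ v, |θ v + (aa*s+bb*t)*d v|
      ≤ lam * ∑ v, (aa*|θ v + s*d v| + bb*|θ v + t*d v|) :=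
        mul_le_mul_of_nonneg_left (Finset.sum_le_sum fun v _ => key v) hlam
    _ = aa * (lam * ∑ v, |θ v + s*d v|) + bb * (lam * ∑ v, |θ v + t*d v|) := by
        rw [Finset.sum_add_distrib, ← Finset.mul_sum, ← Finset.mul_sum]; ring

end core



/-- The logistic pseudo-log-likelihood
`γ(θ; x) = x_u ⟨θ, x_{\u}⟩ - log(exp⟨θ, x_{\u}⟩ + exp(-⟨θ, x_{\u}⟩))`. -/
noncomputable def gammaLL {p : ℕ} (u : Fin p) (x : Fin p → ℝ)
    (θ : {v : Fin p // v ≠ u} → ℝ) : ℝ :=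
  x u * (∑ v, θ v * x v.1) -
    Real.log (Real.exp (∑ v, θ v * x v.1) + Real.exp (-(∑ v, θ v * x v.1)))

/-- The penalized objective `F(θ) = -Σ_t w_t γ(θ; x^t) + λ ‖θ‖₁`. -/
noncomputable def objF {p : ℕ} (u : Fin p) {ι : Type} [Fintype ι]
    (x : ι → Fin p → ℝ) (w : ι → ℝ) (lam : ℝ)
    (θ : {v : Fin p // v ≠ u} → ℝ) : ℝ :=
  -∑ t, w t * gammaLL u (x t) θ + lam * ∑ v, |θ v|

/-- `v`-th coordinate of the weighted score `Σ_t w_t (∇γ(θ; x^t))_v`,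
where `(∇γ(θ; x))_v = x_v (x_u - tanh⟨θ, x_{\u}⟩)`. -/
noncomputable def wscore {p : ℕ} (u : Fin p) {ι : Type} [Fintype ι]
    (x : ι → Fin p → ℝ) (w : ι → ℝ)
    (θ : {v : Fin p // v ≠ u} → ℝ) (v : {v : Fin p // v ≠ u}) : ℝ :=
  ∑ t, w t * (x t v.1 * (x t u - Real.tanh (∑ v', θ v' * x t v'.1)))

set_option maxHeartbeats 1000000 in
/-- If `θ̄` and `θ̃` are both global minimizers of `F`, then the weighted
score vectors coincide: `Σ_t w_t ∇γ(θ̄; x^t) = Σ_t w_t ∇γ(θ̃; x^t)`. -/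
theorem minimizers_same_score
    (p : ℕ) (hp : 2 ≤ p) (u : Fin p) (ι : Type) [Fintype ι]
    (x : ι → Fin p → ℝ) (hx : ∀ t i, x t i = 1 ∨ x t i = -1)
    (w : ι → ℝ) (hw : ∀ t, 0 < w t) (hw1 : ∑ t, w t = 1)
    (lam : ℝ) (hlam : 0 < lam)
    (θbar θtilde : {v : Fin p // v ≠ u} → ℝ)
    (hbar : ∀ θ', objF u x w lam θbar ≤ objF u x w lam θ')
    (htilde : ∀ θ', objF u x w lam θtilde ≤ objF u x w lam θ') :
    ∀ v, wscore u x w θbar v = wscore u x w θtilde v := by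
  classical
  intro v
  set S : ι → ({v : Fin p // v ≠ u} → ℝ) → ℝ := fun t θ => ∑ v', θ v' * x t v'.1 with hSdef
  have hSadd : ∀ (t : ι) (θ d : {v : Fin p // v ≠ u} → ℝ) (r : ℝ),
      S t (θ + r • d) = S t θ + r * S t d := by
    intro t θ d r
    simp only [hSdef, Pi.add_apply, Pi.smul_apply, smul_eq_mul, add_mul, Finset.sum_add_distrib,
      Finset.mul_sum, mul_assoc]
  set c : ι → ℝ := fun t => x t u with hcdef
  -- H is the smooth part of objF
  set H : ({v : Fin p // v ≠ u} → ℝ) → ℝ := fun θ => ∑ t, w t * (lse (S t θ) - c t * (S t θ)) with hHdef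
  have hH : ∀ θ : {v : Fin p // v ≠ u} → ℝ, -∑ t, w t * gammaLL u (x t) θ = H θ := by
    intro θ
    have : ∀ t : ι, w t * (lse (S t θ) - c t * (S t θ)) = -(w t * gammaLL u (x t) θ) := by
      intro t
      simp only [gammaLL, lse, hSdef, hcdef]
      ring
    rw [hHdef]
    simp only [this, Finset.sum_neg_distrib]
  have hHcomp : ∀ (θ d : {v : Fin p // v ≠ u} → ℝ) (r : ℝ),
      H (θ + r • d) = ∑ t, w t * (lse (S t θ + r * S t d) - c t * (S t θ + r * S t d)) := by
    intro θ d r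
    rw [hHdef]
    simp only [hSadd]
  set dd : {v : Fin p // v ≠ u} → ℝ := θtilde - θbar with hdddef
  have hdd0 : θbar + (0:ℝ) • dd = θbar := by funext v'; simp
  have hdd1 : θbar + (1:ℝ) • dd = θtilde := by funext v'; simp [hdddef]
  set φ : ℝ → ℝ := fun r => ∑ t, w t * (lse (S t θbar + r * S t dd)
    - c t * (S t θbar + r * S t dd)) with hφdef
  set ψ : ℝ → ℝ := fun r => lam * ∑ v', |θbar v' + r * dd v'| with hψdef
  set m : ℝ := objF u x w lam θbar with hmdef
  have hobj : ∀ r : ℝ, objF u x w lam (θbar + r • dd) = φ r + ψ r := by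
    intro r
    rw [objF, hH, hHcomp, hφdef, hψdef]
    simp only [Pi.add_apply, Pi.smul_apply, Pi.sub_apply, smul_eq_mul]
  have hmt : objF u x w lam θtilde = m := le_antisymm (htilde θbar) (hbar θtilde)
  have hm0 : φ 0 + ψ 0 = m := by rw [← hobj 0, hdd0]
  have hm1 : φ 1 + ψ 1 = m := by rw [← hobj 1, hdd1, hmt]
  have hlb : ∀ r : ℝ, m ≤ φ r + ψ r := fun r => (hobj r) ▸ hbar _
  have hφconv : ConvexOn ℝ Set.univ φ :=
    convexOn_core w (fun t => S t θbar) (fun t => S t dd) c (fun t => (hw t).le)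
  have hψconv : ConvexOn ℝ Set.univ ψ := convexOn_pen lam hlam.le θbar dd
  have haffine : ∀ r ∈ Ioo (0:ℝ) 1, φ r = φ 0 + r * (φ 1 - φ 0) := by
    intro r hr
    have h1 := hφconv.2 (mem_univ (0:ℝ)) (mem_univ (1:ℝ))
      (by linarith [hr.2] : (0:ℝ) ≤ 1 - r) hr.1.le (by ring)
    have h2 := hψconv.2 (mem_univ (0:ℝ)) (mem_univ (1:ℝ))
      (by linarith [hr.2] : (0:ℝ) ≤ 1 - r) hr.1.le (by ring)
    simp only [smul_eq_mul, mul_zero, mul_one, zero_add] at h1 h2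
    have h3 := hlb r
    have e1 : (1 - r) * φ 0 + r * φ 1 = φ 0 + r * (φ 1 - φ 0) := by ring
    have e2 : (1 - r) * ψ 0 + r * ψ 1 = ψ 0 + r * (ψ 1 - ψ 0) := by ring
    have hsum0 : (φ 1 - φ 0) + (ψ 1 - ψ 0) = 0 := by linarith
    have e3 : r * (ψ 1 - ψ 0) = -(r * (φ 1 - φ 0)) := by linear_combination r * hsum0
    linarith
  set C : ℝ := ∑ t, w t * ((Real.tanh (S t θbar) - c t) * S t dd) with hCdef
  have hφderiv : HasDerivAt φ C 0 := by
    have := hasDerivAt_core w (fun t => S t θbar) (fun t => S t dd) c 0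
    simpa using this
  have hC : C = φ 1 - φ 0 := by
    have ht1 : Tendsto (slope φ 0) (𝓝[>] (0:ℝ)) (𝓝 C) :=
      (hasDerivAt_iff_tendsto_slope.mp hφderiv).mono_left
        (nhdsWithin_mono 0 fun y hy => Set.mem_compl_singleton_iff.mpr (ne_of_gt (mem_Ioi.mp hy)))
    have ht2 : Tendsto (slope φ 0) (𝓝[>] (0:ℝ)) (𝓝 (φ 1 - φ 0)) := by
      apply Tendsto.congr' _ tendsto_const_nhds
      filter_upwards [Ioo_mem_nhdsGT_of_mem
        (by constructor <;> norm_num : (0:ℝ) ∈ Ico (0:ℝ) 1)] with r hr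
      rw [slope_def_field, haffine r hr, sub_zero, add_sub_cancel_left, mul_comm,
        mul_div_assoc, div_self hr.1.ne', mul_one]
    exact tendsto_nhds_unique ht1 ht2
  -- supporting hyperplane inequality for H at θbar
  have hsupp : ∀ z : {v : Fin p // v ≠ u} → ℝ,
      H θbar + (∑ t, w t * ((Real.tanh (S t θbar) - c t) * S t (z - θbar))) ≤ H z := by
    intro z
    set e : {v : Fin p // v ≠ u} → ℝ := z - θbar with hedef
    have hze : θbar + (1:ℝ) • e = z := by funext v'; simp [hedef]
    set χ : ℝ → ℝ := fun r => ∑ t, w t * (lse (S t θbar + r * S t e)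
      - c t * (S t θbar + r * S t e)) with hχdef
    have hχconv : ConvexOn ℝ Set.univ χ :=
      convexOn_core w (fun t => S t θbar) (fun t => S t e) c (fun t => (hw t).le)
    have hχd : HasDerivAt χ (∑ t, w t * ((Real.tanh (S t θbar) - c t) * S t e)) 0 := by
      have := hasDerivAt_core w (fun t => S t θbar) (fun t => S t e) c 0
      simpa using this
    have key := hχconv.le_slope_of_hasDerivAt (mem_univ (0:ℝ)) (mem_univ (1:ℝ)) one_pos hχd
    rw [slope_def_field] at key
    have hχ0 : χ 0 = H θbar := by
      have := hHcomp θbar e 0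
      simp only [zero_smul, add_zero, zero_mul] at this
      simp only [hχdef, zero_mul, add_zero, this]
    have hχ1 : χ 1 = H z := by
      rw [← hze, hHcomp]
    rw [hχ0, hχ1] at key
    have : (H z - H θbar) / (1 - 0) = H z - H θbar := by norm_num
    rw [this] at key
    linarith
  -- direction e_v
  set ev : {v : Fin p // v ≠ u} → ℝ := fun v' => if v' = v then (1:ℝ) else 0 with hevdef
  have hsev : ∀ t, S t ev = x t v.1 := by
    intro t
    rw [hSdef, hevdef]
    simp only [ite_mul, one_mul, zero_mul]
    rw [Finset.sum_ite_eq' Finset.univ v fun v' => x t v'.1]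
    simp
  set A : ℝ := ∑ t, w t * ((Real.tanh (S t θbar) - c t) * x t v.1) with hAdef
  set B : ℝ := ∑ t, w t * ((Real.tanh (S t θtilde) - c t) * x t v.1) with hBdef
  -- the function g
  set g : ℝ → ℝ := fun r => H (θtilde + r • ev) - H θbar - (C + r * A) with hgdef
  have hHts : H θtilde - H θbar = C := by
    have h0 : φ 0 = H θbar := by
      have := hHcomp θbar dd 0
      simp only [zero_smul, add_zero, zero_mul] at this
      simp only [hφdef, zero_mul, add_zero, this]
    have h1 : φ 1 = H θtilde := by
      rw [← hdd1, hHcomp]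
    rw [hC, h0, h1]
  have hg0 : g 0 = 0 := by
    simp only [hgdef, zero_smul, add_zero, mul_zero, zero_mul]
    linarith [hHts]
  have hSsplit : ∀ (t : ι) (r : ℝ), S t (θtilde + r • ev - θbar) = S t dd + r * x t v.1 := by
    intro t r
    have : θtilde + r • ev - θbar = dd + r • ev := by
      funext v'; simp [hdddef]; ring
    rw [this, hSadd] -- S t (dd + r • ev) : hSadd needs form θ + r • d with θ := dd
    rw [hsev]
  have hgnn : ∀ r : ℝ, 0 ≤ g r := by
    intro r
    have h := hsupp (θtilde + r • ev)
    have hsum : (∑ t, w t * ((Real.tanh (S t θbar) - c t) * S t (θtilde + r • ev - θbar)))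
        = C + r * A := by
      have hterm : ∀ t : ι, w t * ((Real.tanh (S t θbar) - c t) * S t (θtilde + r • ev - θbar))
          = w t * ((Real.tanh (S t θbar) - c t) * S t dd)
            + r * (w t * ((Real.tanh (S t θbar) - c t) * x t v.1)) := by
        intro t; rw [hSsplit t r]; ring
      rw [Finset.sum_congr rfl fun t _ => hterm t, Finset.sum_add_distrib, ← Finset.mul_sum,
        ← hCdef, ← hAdef]
    rw [hsum] at h
    simp only [hgdef]
    linarith
  have hgmin : IsLocalMin g 0 := by
    apply Filter.Eventually.of_forall
    intro r
    rw [hg0]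
    exact hgnn r
  have hgd : HasDerivAt g (B - A) 0 := by
    have hcore := hasDerivAt_core w (fun t => S t θtilde) (fun t => x t v.1) c 0
    have haff : HasDerivAt (fun r : ℝ => H θbar + (C + r * A)) A 0 := by
      simpa using (((hasDerivAt_id (0:ℝ)).mul_const A).const_add C).const_add (H θbar)
    have h := hcore.sub haff
    have hfun : (fun r : ℝ => (∑ t, w t * (lse (S t θtilde + r * x t v.1)
        - c t * (S t θtilde + r * x t v.1))) - (H θbar + (C + r * A))) = g := by
      funext r
      simp only [hgdef]
      have : H (θtilde + r • ev) = ∑ t, w t * (lse (S t θtilde + r * x t v.1)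
          - c t * (S t θtilde + r * x t v.1)) := by
        rw [hHcomp]
        simp only [hsev]
      rw [this]
      ring
    rw [← hfun]
    refine h.congr_deriv ?_
    simp only [zero_mul, add_zero, hBdef]
  have hAB : B - A = 0 := hgmin.hasDerivAt_eq_zero hgd
  have hwsbar : wscore u x w θbar v = -A := by
    rw [wscore, hAdef, ← Finset.sum_neg_distrib]
    apply Finset.sum_congr rfl
    intro t _
    rw [hcdef, hSdef]
    ring
  have hwstilde : wscore u x w θtilde v = -B := by
    rw [wscore, hBdef, ← Finset.sum_neg_distrib]
    apply Finset.sum_congr rfl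
    intro t _
    rw [hcdef, hSdef]
    ring
  rw [hwsbar, hwstilde]
  linarith [hAB]
end

section
/- Let θ̄ ∈ ℝ^{p−1} be a global minimizer of F and let v be a coordinate such that |Σ_{t∈T} w_t (∇γ(θ̄; x^t))_v| < λ (strict inequality), where ∇γ(θ; x) = (x_u − tanh(⟨θ, x_{\u}⟩)) · x_{\u}. Then every global minimizer θ̃ of F satisfies θ̃_v = 0. -/
open Real Filter Topology


lemma my_tanh_eq (y : ℝ) : Real.tanh y = (Real.exp y - Real.exp (-y)) / (Real.exp y + Real.exp (-y)) := by
  rw [Real.tanh_eq_sinh_div_cosh, Real.sinh_eq, Real.cosh_eq]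
  have : Real.exp y + Real.exp (-y) ≠ 0 := by positivity
  field_simp

lemma my_tanh_mono : Monotone Real.tanh := by
  intro a b hab
  rw [my_tanh_eq, my_tanh_eq]
  have ha : (0:ℝ) < Real.exp a + Real.exp (-a) := by positivity
  have hb : (0:ℝ) < Real.exp b + Real.exp (-b) := by positivity
  rw [div_le_div_iff₀ ha hb]
  have h1 : Real.exp a * Real.exp (-b) ≤ Real.exp b * Real.exp (-a) := by
    rw [← Real.exp_add, ← Real.exp_add]
    exact Real.exp_le_exp.2 (by linarith)
  nlinarith [Real.exp_pos a, Real.exp_pos b, Real.exp_pos (-a), Real.exp_pos (-b),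
    Real.exp_neg a, Real.exp_neg b]

lemma my_hasDerivAt_logcosh (y : ℝ) :
    HasDerivAt (fun z => Real.log (Real.exp z + Real.exp (-z))) (Real.tanh y) y := by
  have h1 : HasDerivAt (fun z : ℝ => Real.exp z + Real.exp (-z)) (Real.exp y - Real.exp (-y)) y := by
    have := (Real.hasDerivAt_exp (-y)).comp y (hasDerivAt_neg y)
    simpa [sub_eq_add_neg] using (Real.hasDerivAt_exp y).fun_add this
  have hpos : Real.exp y + Real.exp (-y) ≠ 0 := by positivity
  have := h1.log hpos
  rwa [← my_tanh_eq] at this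

lemma my_logcosh_tangent (a b : ℝ) :
    Real.tanh a * (b - a) ≤ Real.log (Real.exp b + Real.exp (-b)) - Real.log (Real.exp a + Real.exp (-a)) := by
  set G := fun z => Real.log (Real.exp z + Real.exp (-z)) with hG
  rcases lt_trichotomy a b with h | h | h
  · obtain ⟨c, hc, hceq⟩ := exists_hasDerivAt_eq_slope G Real.tanh h
      (fun z _ => (my_hasDerivAt_logcosh z).continuousAt.continuousWithinAt)
      (fun z _ => my_hasDerivAt_logcosh z)
    have hac : Real.tanh a ≤ Real.tanh c := my_tanh_mono hc.1.le
    have hba : (0:ℝ) < b - a := by linarith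
    have := mul_le_mul_of_nonneg_right hac hba.le
    rw [hceq] at this
    rw [div_mul_cancel₀] at this
    · exact this
    · exact ne_of_gt hba
  · simp [h]
  · obtain ⟨c, hc, hceq⟩ := exists_hasDerivAt_eq_slope G Real.tanh h
      (fun z _ => (my_hasDerivAt_logcosh z).continuousAt.continuousWithinAt)
      (fun z _ => my_hasDerivAt_logcosh z)
    have hca : Real.tanh c ≤ Real.tanh a := my_tanh_mono hc.2.le
    have hab : (0:ℝ) < a - b := by linarith
    have := mul_le_mul_of_nonneg_right hca hab.le
    rw [hceq, div_mul_cancel₀ _ (ne_of_gt hab)] at this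
    nlinarith


lemma my_deriv_ge {ψ : ℝ → ℝ} {d c : ℝ} (hd : HasDerivAt ψ d 0)
    (h : ∀ᶠ t in 𝓝[>] (0:ℝ), c * t ≤ ψ t - ψ 0) : c ≤ d := by
  have hs : Tendsto (slope ψ 0) (𝓝[>] (0:ℝ)) (𝓝 d) :=
    (hasDerivAt_iff_tendsto_slope.1 hd).mono_left
      (nhdsWithin_mono 0 (fun x hx => ne_of_gt hx))
  refine ge_of_tendsto hs ?_
  filter_upwards [h, self_mem_nhdsWithin] with t ht ht0
  have ht0 : (0:ℝ) < t := ht0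
  rw [slope_def_field]
  have : (ψ t - ψ 0) / (t - 0) ≥ c := by
    rw [ge_iff_le, le_div_iff₀ (by linarith)]
    linarith
  simpa [div_eq_inv_mul] using this

lemma my_deriv_le {ψ : ℝ → ℝ} {d c : ℝ} (hd : HasDerivAt ψ d 0)
    (h : ∀ᶠ t in 𝓝[<] (0:ℝ), c * t ≤ ψ t - ψ 0) : d ≤ c := by
  have hs : Tendsto (slope ψ 0) (𝓝[<] (0:ℝ)) (𝓝 d) :=
    (hasDerivAt_iff_tendsto_slope.1 hd).mono_left
      (nhdsWithin_mono 0 (fun x hx => ne_of_lt hx))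
  refine le_of_tendsto hs ?_
  filter_upwards [h, self_mem_nhdsWithin] with t ht ht0
  have ht0 : t < (0:ℝ) := ht0
  rw [slope_def_field]
  have : (ψ t - ψ 0) / (t - 0) ≤ c := by
    rw [div_le_iff_of_neg (by linarith)]
    linarith
  simpa using this


lemma my_sum_update {α : Type*} [Fintype α] [DecidableEq α] (θ : α → ℝ) (j : α) (y : ℝ)
    (f : α → ℝ) : ∑ i, Function.update θ j y i * f i = (∑ i, θ i * f i) + (y - θ j) * f j := by
  have : ∀ i, Function.update θ j y i * f i
      = θ i * f i + (if i = j then (y - θ j) * f j else 0) := by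
    intro i
    by_cases h : i = j
    · subst h; simp [Function.update_self]; ring
    · simp [Function.update_of_ne h, h]
  rw [Finset.sum_congr rfl (fun i _ => this i), Finset.sum_add_distrib,
    Finset.sum_ite_eq' Finset.univ j (fun _ => (y - θ j) * f j)]
  simp

lemma my_abs_update {α : Type*} [Fintype α] [DecidableEq α] (θ : α → ℝ) (j : α) (y : ℝ) :
    ∑ i, |Function.update θ j y i| = (∑ i, |θ i|) + (|y| - |θ j|) := by
  have : ∀ i, |Function.update θ j y i|
      = |θ i| + (if i = j then |y| - |θ j| else 0) := by
    intro i
    by_cases h : i = j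
    · subst h; simp [Function.update_self]
    · simp [Function.update_of_ne h, h]
  rw [Finset.sum_congr rfl (fun i _ => this i), Finset.sum_add_distrib,
    Finset.sum_ite_eq' Finset.univ j (fun _ => |y| - |θ j|)]
  simp

lemma my_ell_lower {p : ℕ} (u : Fin p) {ι : Type} [Fintype ι]
    (x : ι → Fin p → ℝ) (w : ι → ℝ) (hw : ∀ t, 0 ≤ w t)
    (θ θ₀ : {v : Fin p // v ≠ u} → ℝ) :
    (-∑ t, w t * gammaLL u (x t) θ₀) - ∑ j, wscore u x w θ₀ j * (θ j - θ₀ j)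
      ≤ -∑ t, w t * gammaLL u (x t) θ := by
  classical
  set a : ι → ℝ := fun t => ∑ v', θ₀ v' * x t v'.1 with ha
  set b : ι → ℝ := fun t => ∑ v', θ v' * x t v'.1 with hb
  have key : ∑ j, wscore u x w θ₀ j * (θ j - θ₀ j)
      = ∑ t, w t * ((x t u - Real.tanh (a t)) * (b t - a t)) := by
    have hba : ∀ t, b t - a t = ∑ j, (θ j - θ₀ j) * x t j.1 := by
      intro t
      rw [hb, ha, ← Finset.sum_sub_distrib]
      exact Finset.sum_congr rfl (fun j _ => by ring)
    simp only [wscore, hba, Finset.sum_mul, Finset.mul_sum]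
    rw [Finset.sum_comm]
    exact Finset.sum_congr rfl (fun t _ => Finset.sum_congr rfl (fun j _ => by ring))
  rw [key, sub_le_iff_le_add]
  have hterm : ∀ t ∈ Finset.univ (α := ι), -(w t * gammaLL u (x t) θ₀)
      ≤ -(w t * gammaLL u (x t) θ) + w t * ((x t u - Real.tanh (a t)) * (b t - a t)) := by
    intro t _
    have htan := my_logcosh_tangent (a t) (b t)
    have hwt := hw t
    simp only [gammaLL]
    have hmul := mul_le_mul_of_nonneg_left htan hwt
    nlinarith [hmul]
  have h2 := Finset.sum_le_sum hterm
  simpa [Finset.sum_add_distrib, Finset.sum_neg_distrib] using h2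

lemma my_kkt {p : ℕ} (u : Fin p) {ι : Type} [Fintype ι]
    (x : ι → Fin p → ℝ) (w : ι → ℝ) (lam : ℝ) (hlam : 0 ≤ lam)
    (θbar : {v : Fin p // v ≠ u} → ℝ)
    (hbar : ∀ θ', objF u x w lam θbar ≤ objF u x w lam θ')
    (j : {v : Fin p // v ≠ u}) :
    |wscore u x w θbar j| ≤ lam ∧ wscore u x w θbar j * θbar j = lam * |θbar j| := by
  classical
  set A : ι → ℝ := fun t => ∑ v', θbar v' * x t v'.1 with hA
  set B : ι → ℝ := fun t => x t j.1 with hB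
  set ψ : ℝ → ℝ := fun h => ∑ t, w t *
    (Real.log (Real.exp (A t + h * B t) + Real.exp (-(A t + h * B t)))
      - x t u * (A t + h * B t)) with hψdef
  set D : ℝ := ∑ t, w t * (Real.tanh (A t) * B t - x t u * B t) with hD
  -- derivative of ψ at 0
  have hψ : HasDerivAt ψ D 0 := by
    rw [hψdef, hD]
    apply HasDerivAt.fun_sum
    intro t _
    have hm : HasDerivAt (fun h : ℝ => A t + h * B t) (B t) 0 := by
      simpa using ((hasDerivAt_id (0:ℝ)).mul_const (B t)).const_add (A t)
    have hg := (my_hasDerivAt_logcosh (A t + 0 * B t)).comp 0 hm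
    have hl := hm.const_mul (x t u)
    have := (hg.sub hl).const_mul (w t)
    simpa using this
  -- D = - wscore
  have hDw : D = -wscore u x w θbar j := by
    rw [hD, wscore, ← Finset.sum_neg_distrib]
    exact Finset.sum_congr rfl (fun t _ => by show w t * (Real.tanh (A t) * B t - x t u * B t) = -(w t * (x t j.1 * (x t u - Real.tanh (A t)))); ring)
  -- objective along the line
  have hval : ∀ h : ℝ, objF u x w lam (Function.update θbar j (θbar j + h))
      = ψ h + lam * ((∑ i, |θbar i|) + (|θbar j + h| - |θbar j|)) := by
    intro h
    have hsum : ∀ t : ι, (∑ v', Function.update θbar j (θbar j + h) v' * x t v'.1)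
        = A t + h * B t := by
      intro t
      rw [my_sum_update θbar j (θbar j + h) (fun v' => x t v'.1)]
      show (∑ v', θbar v' * x t v'.1) + (θbar j + h - θbar j) * x t j.1 = A t + h * B t
      rw [hA, hB]; ring
    rw [objF, my_abs_update]
    congr 1
    rw [← Finset.sum_neg_distrib]
    apply Finset.sum_congr rfl
    intro t _
    rw [gammaLL, hsum t]
    ring
  have h0 : objF u x w lam θbar = ψ 0 + lam * ∑ i, |θbar i| := by
    have := hval 0
    rw [show θbar j + 0 = θbar j by ring, Function.update_eq_self] at this
    simpa using this
  have key : ∀ h : ℝ, ψ 0 + lam * |θbar j| ≤ ψ h + lam * |θbar j + h| := by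
    intro h
    have h1 := hbar (Function.update θbar j (θbar j + h))
    rw [hval h, h0] at h1
    linarith
  -- |D| ≤ lam
  have hDge : -lam ≤ D := by
    apply my_deriv_ge hψ
    filter_upwards [self_mem_nhdsWithin] with t ht
    have ht : (0:ℝ) < t := ht
    have h1 := key t
    have h2 : |θbar j + t| ≤ |θbar j| + t := by
      calc |θbar j + t| ≤ |θbar j| + |t| := abs_add_le _ _
      _ = |θbar j| + t := by rw [abs_of_pos ht]
    nlinarith
  have hDle : D ≤ lam := by
    apply my_deriv_le hψ
    filter_upwards [self_mem_nhdsWithin] with t ht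
    have ht : t < (0:ℝ) := ht
    have h1 := key t
    have h2 : |θbar j + t| ≤ |θbar j| - t := by
      calc |θbar j + t| ≤ |θbar j| + |t| := abs_add_le _ _
      _ = |θbar j| - t := by rw [abs_of_neg ht]; ring
    nlinarith
  constructor
  · rw [show wscore u x w θbar j = -D by rw [hDw]; ring]
    rw [abs_neg, abs_le]
    exact ⟨by linarith, by linarith⟩
  · rcases lt_trichotomy (θbar j) 0 with hj | hj | hj
    · -- θbar j < 0 : D = lam
      have hge : lam ≤ D := by
        apply my_deriv_ge hψ
        filter_upwards [Ioo_mem_nhdsGT_of_mem (show (0:ℝ) ∈ Set.Ico (0:ℝ) (-θbar j) by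
          constructor <;> [rfl; linarith])] with t ht
        obtain ⟨ht0, ht1⟩ := ht
        have h1 := key t
        have h2 : |θbar j + t| = -(θbar j + t) := abs_of_neg (by linarith)
        have h3 : |θbar j| = -θbar j := abs_of_neg hj
        nlinarith
      have : D = lam := le_antisymm hDle hge
      rw [hDw] at this
      have hws : wscore u x w θbar j = -lam := by linarith
      rw [hws, abs_of_neg hj]; ring
    · simp [hj]
    · -- θbar j > 0 : D = -lam
      have hle : D ≤ -lam := by
        apply my_deriv_le hψ
        filter_upwards [Ioo_mem_nhdsLT_of_mem (show (0:ℝ) ∈ Set.Ioc (-θbar j) (0:ℝ) by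
          constructor <;> [linarith; rfl])] with t ht
        obtain ⟨ht0, ht1⟩ := ht
        have h1 := key t
        have h2 : |θbar j + t| = θbar j + t := abs_of_pos (by linarith)
        have h3 : |θbar j| = θbar j := abs_of_pos hj
        nlinarith
      have : D = -lam := le_antisymm hle hDge
      rw [hDw] at this
      have hws : wscore u x w θbar j = lam := by linarith
      rw [hws, abs_of_pos hj]

/-- If `θ̄` is a global minimizer of `F` and at coordinate `v` the dual
variable is strictly feasible, `|Σ_t w_t (∇γ(θ̄; x^t))_v| < λ`, then every global
minimizer `θ̃` of `F` satisfies `θ̃_v = 0`. -/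
theorem strict_dual_feasibility_zero
    (p : ℕ) (hp : 2 ≤ p) (u : Fin p) (ι : Type) [Fintype ι]
    (x : ι → Fin p → ℝ) (hx : ∀ t i, x t i = 1 ∨ x t i = -1)
    (w : ι → ℝ) (hw : ∀ t, 0 < w t) (hw1 : ∑ t, w t = 1)
    (lam : ℝ) (hlam : 0 < lam)
    (θbar : {v : Fin p // v ≠ u} → ℝ)
    (hbar : ∀ θ', objF u x w lam θbar ≤ objF u x w lam θ')
    (v : {v : Fin p // v ≠ u})
    (hv : |wscore u x w θbar v| < lam) :
    ∀ θtilde : {v : Fin p // v ≠ u} → ℝ,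
      (∀ θ', objF u x w lam θtilde ≤ objF u x w lam θ') → θtilde v = 0 := by
  intro θtilde htilde
  classical
  have hw0 : ∀ t, 0 ≤ w t := fun t => (hw t).le
  have hkkt := fun j => my_kkt u x w lam hlam.le θbar hbar j
  have hEq : objF u x w lam θtilde = objF u x w lam θbar :=
    le_antisymm (htilde θbar) (hbar θtilde)
  have hlow := my_ell_lower u x w hw0 θtilde θbar
  have hb : ∑ j, wscore u x w θbar j * θbar j = lam * ∑ j, |θbar j| := by
    rw [Finset.mul_sum]
    exact Finset.sum_congr rfl (fun j _ => (hkkt j).2)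
  have hT_nonneg : ∀ j ∈ Finset.univ (α := {v : Fin p // v ≠ u}),
      0 ≤ lam * |θtilde j| - wscore u x w θbar j * θtilde j := by
    intro j _
    have h1 : wscore u x w θbar j * θtilde j ≤ |wscore u x w θbar j| * |θtilde j| := by
      calc wscore u x w θbar j * θtilde j ≤ |wscore u x w θbar j * θtilde j| := le_abs_self _
      _ = |wscore u x w θbar j| * |θtilde j| := abs_mul _ _
    have h2 := mul_le_mul_of_nonneg_right (hkkt j).1 (abs_nonneg (θtilde j))
    linarith
  have hsplit : ∑ j, wscore u x w θbar j * (θtilde j - θbar j)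
      = (∑ j, wscore u x w θbar j * θtilde j) - ∑ j, wscore u x w θbar j * θbar j := by
    rw [← Finset.sum_sub_distrib]
    exact Finset.sum_congr rfl (fun j _ => by ring)
  have hTsplit : ∑ j, (lam * |θtilde j| - wscore u x w θbar j * θtilde j)
      = lam * (∑ j, |θtilde j|) - ∑ j, wscore u x w θbar j * θtilde j := by
    rw [Finset.sum_sub_distrib, Finset.mul_sum]
  have hEq' := hEq
  simp only [objF] at hEq'
  have hTle : ∑ j, (lam * |θtilde j| - wscore u x w θbar j * θtilde j) ≤ 0 := by
    linarith
  have hT0 : ∑ j, (lam * |θtilde j| - wscore u x w θbar j * θtilde j) = 0 :=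
    le_antisymm hTle (Finset.sum_nonneg hT_nonneg)
  have hterm0 := (Finset.sum_eq_zero_iff_of_nonneg hT_nonneg).1 hT0 v (Finset.mem_univ v)
  by_contra hne
  have habs : 0 < |θtilde v| := abs_pos.2 hne
  have h1 : wscore u x w θbar v * θtilde v ≤ |wscore u x w θbar v| * |θtilde v| := by
    calc wscore u x w θbar v * θtilde v ≤ |wscore u x w θbar v * θtilde v| := le_abs_self _
    _ = |wscore u x w θbar v| * |θtilde v| := abs_mul _ _
  have h2 : |wscore u x w θbar v| * |θtilde v| < lam * |θtilde v| :=
    mul_lt_mul_of_pos_right hv habs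
  linarith
end

section
/- For any θ, θ′ ∈ ℝ^{p−1}, define the Taylor remainder Δ ∈ ℝ^{p−1} by Δ := Σ_{t∈T} w_t (∇γ(θ′; x^t) − ∇γ(θ; x^t)) − [Σ_{t∈T} w_t ∇²γ(θ; x^t)](θ′ − θ). Then for every coordinate v, |Δ_v| ≤ Σ_{t∈T} w_t ⟨θ′ − θ, x^t_{\u}⟩² = (θ′ − θ)ᵀ [Σ_{t∈T} w_t x^t_{\u}(x^t_{\u})ᵀ] (θ′ − θ). In particular, if θ and θ′ are both supported on a set S of coordinates and zᵀ[Σ_{t∈T} w_t x^t_{\u}(x^t_{\u})ᵀ]z ≤ D_max‖z‖₂² for all z supported on S, then |Δ_v| ≤ D_max ‖θ′_S − θ_S‖₂² for every v. -/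
open Real

lemma tanh_sq_lt_one (x : ℝ) : Real.tanh x ^ 2 < 1 := by
  rw [Real.tanh_eq_sinh_div_cosh, div_pow, div_lt_one (by positivity)]
  nlinarith [Real.cosh_sq x, Real.cosh_pos x]

lemma tanh_hasDerivAt (x : ℝ) : HasDerivAt Real.tanh (1 - Real.tanh x ^ 2) x := by
  have h : HasDerivAt Real.tanh
      ((Real.cosh x * Real.cosh x - Real.sinh x * Real.sinh x) / Real.cosh x ^ 2) x := by
    have := (Real.hasDerivAt_sinh x).fun_div (Real.hasDerivAt_cosh x) (ne_of_gt (Real.cosh_pos x))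
    simp only [← Real.tanh_eq_sinh_div_cosh] at this
    exact this
  convert h using 1
  rw [Real.tanh_eq_sinh_div_cosh, div_pow]
  have := Real.cosh_pos x
  field_simp

lemma cubic_bound {t : ℝ} (ht : t ^ 2 ≤ 1) : |2 * t * (1 - t ^ 2)| ≤ 1 := by
  rw [abs_le]
  constructor <;> nlinarith [sq_nonneg (2*t-1), sq_nonneg (2*t+1), sq_nonneg t, sq_nonneg (t^2-1), sq_nonneg (2*t^2-1)]

lemma tanh_sq_lipschitz (a x : ℝ) : |Real.tanh x ^ 2 - Real.tanh a ^ 2| ≤ |x - a| := by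
  have h : ∀ y ∈ (Set.univ : Set ℝ), HasDerivWithinAt (fun s => Real.tanh s ^ 2)
      (2 * Real.tanh y * (1 - Real.tanh y ^ 2)) Set.univ y := by
    intro y _
    have h2 : HasDerivAt (fun s => Real.tanh s ^ 2)
        (2 * Real.tanh y * (1 - Real.tanh y ^ 2)) y := by
      have : HasDerivAt (fun s => Real.tanh s ^ 2) _ y := (tanh_hasDerivAt y).pow 2
      convert this using 1
      ring
    exact h2.hasDerivWithinAt
  have := Convex.norm_image_sub_le_of_norm_hasDerivWithin_le h
    (fun y _ => by rw [Real.norm_eq_abs]; exact cubic_bound (_root_.tanh_sq_lt_one y).le)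
    convex_univ (Set.mem_univ a) (Set.mem_univ x)
  simpa using this

lemma key (a b : ℝ) :
    |Real.tanh b - Real.tanh a - (1 - Real.tanh a ^ 2) * (b - a)| ≤ (b - a) ^ 2 := by
  set g : ℝ → ℝ := fun x => Real.tanh x - Real.tanh a - (1 - Real.tanh a ^ 2) * (x - a) with hg
  have hderiv : ∀ x ∈ Set.uIcc a b, HasDerivWithinAt g
      (Real.tanh a ^ 2 - Real.tanh x ^ 2) (Set.uIcc a b) x := by
    intro x _
    have h1 := (tanh_hasDerivAt x).sub_const (Real.tanh a)
    have h2 : HasDerivAt (fun x : ℝ => (1 - Real.tanh a ^ 2) * (x - a))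
        (1 - Real.tanh a ^ 2) x := by
      simpa using ((hasDerivAt_id x).sub_const a).const_mul (1 - Real.tanh a ^ 2)
    have := h1.sub h2
    have heq : (1 - Real.tanh x ^ 2) - (1 - Real.tanh a ^ 2)
        = Real.tanh a ^ 2 - Real.tanh x ^ 2 := by ring
    rw [heq] at this
    exact this.hasDerivWithinAt
  have hbound : ∀ x ∈ Set.uIcc a b, ‖Real.tanh a ^ 2 - Real.tanh x ^ 2‖ ≤ |b - a| := by
    intro x hx
    rw [Real.norm_eq_abs, abs_sub_comm]
    refine (tanh_sq_lipschitz a x).trans ?_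
    rcases le_total a b with h | h
    · rw [Set.uIcc_of_le h, Set.mem_Icc] at hx
      rw [abs_of_nonneg (sub_nonneg.2 h), abs_le]
      constructor <;> linarith [hx.1, hx.2]
    · rw [Set.uIcc_of_ge h, Set.mem_Icc] at hx
      rw [abs_of_nonpos (sub_nonpos.2 h), abs_le]
      constructor <;> linarith [hx.1, hx.2]
  have := Convex.norm_image_sub_le_of_norm_hasDerivWithin_le hderiv hbound
    (convex_uIcc a b) Set.left_mem_uIcc Set.right_mem_uIcc
  have hga : g a = 0 := by simp [hg]
  rw [hga, sub_zero, Real.norm_eq_abs, Real.norm_eq_abs] at this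
  calc |g b| ≤ |b - a| * |b - a| := this
    _ = (b - a) ^ 2 := by rw [← abs_mul, ← sq, abs_sq]

/-- The Taylor remainder
`Δ = Σ_t w_t (∇γ(θ'; x^t) - ∇γ(θ; x^t)) - [Σ_t w_t ∇²γ(θ; x^t)](θ' - θ)`
satisfies, for every coordinate `v`,
`|Δ_v| ≤ Σ_t w_t ⟨θ' - θ, x^t_{\u}⟩² = (θ'-θ)ᵀ [Σ_t w_t x^t_{\u}(x^t_{\u})ᵀ] (θ'-θ)`.
In particular, if `θ, θ'` are supported on `S` and the quadratic form of
`Σ_t w_t x^t_{\u}(x^t_{\u})ᵀ` is bounded by `D_max` on vectors supported on `S`, then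
`|Δ_v| ≤ D_max ‖θ'_S - θ_S‖₂²` for every `v`. -/
theorem taylor_remainder_bound
    (p : ℕ) (hp : 2 ≤ p) (u : Fin p) (ι : Type) [Fintype ι]
    (x : ι → Fin p → ℝ) (hx : ∀ t i, x t i = 1 ∨ x t i = -1)
    (w : ι → ℝ) (hw : ∀ t, 0 < w t) (hw1 : ∑ t, w t = 1)
    (θ θ' : {v : Fin p // v ≠ u} → ℝ)
    (Δ : {v : Fin p // v ≠ u} → ℝ)
    (hΔ : ∀ v, Δ v =
      ∑ t, w t *
          (x t v.1 * (x t u - Real.tanh (∑ v', θ' v' * x t v'.1)) -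
            x t v.1 * (x t u - Real.tanh (∑ v', θ v' * x t v'.1))) -
        ∑ t, w t *
          (-(1 - Real.tanh (∑ v', θ v' * x t v'.1) ^ 2) *
            (x t v.1 * ∑ v', (θ' v' - θ v') * x t v'.1))) :
    (∀ v, |Δ v| ≤ ∑ t, w t * (∑ v', (θ' v' - θ v') * x t v'.1) ^ 2) ∧
    (∑ t, w t * (∑ v', (θ' v' - θ v') * x t v'.1) ^ 2 =
      ∑ a, ∑ b, (θ' a - θ a) * (∑ t, w t * (x t a.1 * x t b.1)) * (θ' b - θ b)) ∧
    (∀ S : Finset {v : Fin p // v ≠ u}, ∀ Dmax : ℝ,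
      (∀ v ∉ S, θ v = 0) → (∀ v ∉ S, θ' v = 0) →
      (∀ z : {v : Fin p // v ≠ u} → ℝ, (∀ v ∉ S, z v = 0) →
        ∑ t, w t * (∑ v', z v' * x t v'.1) ^ 2 ≤ Dmax * ∑ v', (z v') ^ 2) →
      ∀ v, |Δ v| ≤ Dmax * ∑ v' ∈ S, (θ' v' - θ v') ^ 2) := by
  set a : ι → ℝ := fun t => ∑ v', θ v' * x t v'.1 with ha
  set b : ι → ℝ := fun t => ∑ v', θ' v' * x t v'.1 with hb
  set D : ι → ℝ := fun t => ∑ v', (θ' v' - θ v') * x t v'.1 with hD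
  have hDab : ∀ t, D t = b t - a t := by
    intro t
    simp only [hD, hb, ha, sub_mul, Finset.sum_sub_distrib]
  have part1 : ∀ v, |Δ v| ≤ ∑ t, w t * (D t) ^ 2 := by
    intro v
    have hΔv : Δ v = ∑ t, w t * x t v.1 *
        (-(Real.tanh (b t) - Real.tanh (a t) - (1 - Real.tanh (a t) ^ 2) * (b t - a t))) := by
      rw [hΔ v, ← Finset.sum_sub_distrib]
      refine Finset.sum_congr rfl fun t _ => ?_
      rw [← hDab t]
      ring
    rw [hΔv]
    refine (Finset.abs_sum_le_sum_abs _ _).trans (Finset.sum_le_sum fun t _ => ?_)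
    rw [abs_mul, abs_mul, abs_neg, abs_of_pos (hw t)]
    have hxv : |x t v.1| = 1 := by rcases hx t v.1 with h | h <;> rw [h] <;> norm_num
    rw [hxv, mul_one]
    have := key (a t) (b t)
    rw [← hDab t] at this ⊢
    calc w t * |Real.tanh (b t) - Real.tanh (a t) - (1 - Real.tanh (a t) ^ 2) * D t|
        ≤ w t * (D t) ^ 2 := by
          apply mul_le_mul_of_nonneg_left _ (hw t).le
          simpa [hDab t] using key (a t) (b t)
      _ = w t * D t ^ 2 := rfl
  have part2 : ∑ t, w t * (D t) ^ 2 =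
      ∑ c, ∑ d, (θ' c - θ c) * (∑ t, w t * (x t c.1 * x t d.1)) * (θ' d - θ d) := by
    have step : ∀ t, w t * (D t) ^ 2 =
        ∑ c, ∑ d, (θ' c - θ c) * (w t * (x t c.1 * x t d.1)) * (θ' d - θ d) := by
      intro t
      simp only [hD, sq, Finset.sum_mul_sum, Finset.mul_sum]
      refine Finset.sum_congr rfl fun c _ => ?_
      rw [Finset.sum_mul, Finset.mul_sum]
      refine Finset.sum_congr rfl fun d _ => ?_
      ring
    rw [Finset.sum_congr rfl fun t _ => step t, Finset.sum_comm]
    refine Finset.sum_congr rfl fun c _ => ?_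
    rw [Finset.sum_comm]
    refine Finset.sum_congr rfl fun d _ => ?_
    rw [Finset.mul_sum, Finset.sum_mul]
  refine ⟨part1, part2, ?_⟩
  intro S Dmax hθS hθ'S hquad v
  have hz : ∀ v' ∉ S, θ' v' - θ v' = 0 := fun v' hv' => by
    rw [hθS v' hv', hθ'S v' hv', sub_zero]
  have h1 := hquad (fun v' => θ' v' - θ v') hz
  have h2 : ∑ v', (θ' v' - θ v') ^ 2 = ∑ v' ∈ S, (θ' v' - θ v') ^ 2 := by
    refine (Finset.sum_subset (Finset.subset_univ S) fun v' _ hv' => ?_).symm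
    rw [hz v' hv']
    ring
  calc |Δ v| ≤ ∑ t, w t * (D t) ^ 2 := part1 v
    _ ≤ Dmax * ∑ v', (θ' v' - θ v') ^ 2 := h1
    _ = Dmax * ∑ v' ∈ S, (θ' v' - θ v') ^ 2 := by rw [h2]
end

section
/- Let S ⊆ {1,…,p−1} with complement S^c, let Q be a (p−1)×(p−1) real matrix whose block Q_{SS} is invertible, let W ∈ ℝ^{p−1}, let λ > 0, let 0 < α ≤ 1, and let θ* ∈ ℝ^{p−1} be supported on S with θ*_v ≠ 0 for all v ∈ S. Assume: (i) for every v ∈ S, |(Q_{SS}^{−1}(λ·sign(θ*_S) + W_S))_v| < |θ*_v|; (ii) the matrix ∞-operator norm satisfies ‖Q_{S^cS} Q_{SS}^{−1}‖_{∞} ≤ 1 − α/2; and (iii) for every v ∈ S^c, |(W_{S^c} − Q_{S^cS} Q_{SS}^{−1} W_S)_v| < (α/2)λ. Define θ̄ ∈ ℝ^{p−1} by θ̄_S := θ*_S − Q_{SS}^{−1}(λ·sign(θ*_S) + W_S) and θ̄_{S^c} := 0. Then: sign(θ̄_v) = sign(θ*_v) for every v; Q_{SS}(θ̄_S − θ*_S)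 + W_S = −λ·sign(θ̄_S); and ‖Q_{S^cS}(θ̄_S − θ*_S) + W_{S^c}‖_∞ < λ. -/
open Matrix

lemma sign_sub_of_abs_lt' {t u : ℝ} (h : |u| < |t|) :
    Real.sign (t - u) = Real.sign t := by
  rcases lt_trichotomy t 0 with ht | ht | ht
  · rw [Real.sign_of_neg ht, Real.sign_of_neg]
    have h1 : |u| < -t := by rwa [abs_of_neg ht] at h
    nlinarith [neg_abs_le u, le_abs_self u]
  · exfalso; rw [ht, abs_zero] at h; exact (abs_nonneg u).not_gt h
  · rw [Real.sign_of_pos ht, Real.sign_of_pos]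
    have h1 : |u| < t := by rwa [abs_of_pos ht] at h
    nlinarith [le_abs_self u]

lemma abs_real_sign_le_one (x : ℝ) : |Real.sign x| ≤ 1 := by
  rcases lt_trichotomy x 0 with h | h | h <;>
    simp [Real.sign_of_neg, Real.sign_of_pos, h]

/-- the primal-dual witness construction. With `Q_{SS}` invertible,
`θ*` supported on `S` with nonzero entries on `S`, hypotheses (i)–(iii), and
`θ̄_S = θ*_S - Q_{SS}⁻¹(λ sign(θ*_S) + W_S)`, `θ̄_{S^c} = 0`, we get
`sign(θ̄) = sign(θ*)`, `Q_{SS}(θ̄_S - θ*_S) + W_S = -λ sign(θ̄_S)`, and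
`‖Q_{S^cS}(θ̄_S - θ*_S) + W_{S^c}‖_∞ < λ`. -/
theorem primal_dual_witness
    (p : ℕ) (hp : 2 ≤ p) (S : Finset (Fin (p - 1)))
    (Q : Matrix (Fin (p - 1)) (Fin (p - 1)) ℝ)
    (W : Fin (p - 1) → ℝ) (lam : ℝ) (hlam : 0 < lam)
    (α : ℝ) (hα0 : 0 < α) (hα1 : α ≤ 1)
    (θstar : Fin (p - 1) → ℝ)
    (hsupp : ∀ v ∉ S, θstar v = 0) (hnz : ∀ v ∈ S, θstar v ≠ 0)
    -- `Q_{SS}` is invertible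
    (hdet : IsUnit (Q.submatrix (fun a : {v : Fin (p - 1) // v ∈ S} => a.1)
        (fun b : {v : Fin (p - 1) // v ∈ S} => b.1)).det)
    -- (i) `|(Q_{SS}⁻¹(λ sign(θ*_S) + W_S))_v| < |θ*_v|` for all `v ∈ S`
    (hi : ∀ v : {v : Fin (p - 1) // v ∈ S},
      |((Q.submatrix (fun a : {v : Fin (p - 1) // v ∈ S} => a.1)
            (fun b : {v : Fin (p - 1) // v ∈ S} => b.1))⁻¹ *ᵥ
          (fun b : {v : Fin (p - 1) // v ∈ S} => lam * Real.sign (θstar b.1) + W b.1)) v|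
        < |θstar v.1|)
    -- (ii) `‖Q_{S^cS} Q_{SS}⁻¹‖_∞ ≤ 1 - α/2` (maximum absolute row sum)
    (hii : ∀ a : {v : Fin (p - 1) // v ∉ S},
      ∑ b : {v : Fin (p - 1) // v ∈ S},
        |(Q.submatrix (fun a : {v : Fin (p - 1) // v ∉ S} => a.1)
              (fun b : {v : Fin (p - 1) // v ∈ S} => b.1) *
            (Q.submatrix (fun a : {v : Fin (p - 1) // v ∈ S} => a.1)
              (fun b : {v : Fin (p - 1) // v ∈ S} => b.1))⁻¹) a b|
        ≤ 1 - α / 2)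
    -- (iii) `|(W_{S^c} - Q_{S^cS} Q_{SS}⁻¹ W_S)_v| < (α/2)λ` for all `v ∈ S^c`
    (hiii : ∀ v : {v : Fin (p - 1) // v ∉ S},
      |W v.1 - ((Q.submatrix (fun a : {v : Fin (p - 1) // v ∉ S} => a.1)
              (fun b : {v : Fin (p - 1) // v ∈ S} => b.1) *
            (Q.submatrix (fun a : {v : Fin (p - 1) // v ∈ S} => a.1)
              (fun b : {v : Fin (p - 1) // v ∈ S} => b.1))⁻¹) *ᵥ
          (fun b : {v : Fin (p - 1) // v ∈ S} => W b.1)) v|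
        < α / 2 * lam)
    -- the witness `θ̄`
    (θbar : Fin (p - 1) → ℝ)
    (hθbar : ∀ v, θbar v =
      if h : v ∈ S then
        θstar v -
          ((Q.submatrix (fun a : {v : Fin (p - 1) // v ∈ S} => a.1)
                (fun b : {v : Fin (p - 1) // v ∈ S} => b.1))⁻¹ *ᵥ
              (fun b : {v : Fin (p - 1) // v ∈ S} =>
                lam * Real.sign (θstar b.1) + W b.1)) ⟨v, h⟩
      else 0) :
    (∀ v, Real.sign (θbar v) = Real.sign (θstar v)) ∧
    (∀ v : {v : Fin (p - 1) // v ∈ S},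
      (Q.submatrix (fun a : {v : Fin (p - 1) // v ∈ S} => a.1)
            (fun b : {v : Fin (p - 1) // v ∈ S} => b.1) *ᵥ
          (fun b : {v : Fin (p - 1) // v ∈ S} => θbar b.1 - θstar b.1)) v + W v.1
        = -(lam * Real.sign (θbar v.1))) ∧
    (∀ v : {v : Fin (p - 1) // v ∉ S},
      |(Q.submatrix (fun a : {v : Fin (p - 1) // v ∉ S} => a.1)
            (fun b : {v : Fin (p - 1) // v ∈ S} => b.1) *ᵥ
          (fun b : {v : Fin (p - 1) // v ∈ S} => θbar b.1 - θstar b.1)) v + W v.1|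
        < lam) := by
  classical
  set A := Q.submatrix (fun a : {v : Fin (p - 1) // v ∈ S} => a.1)
      (fun b : {v : Fin (p - 1) // v ∈ S} => b.1) with hAdef
  set M := Q.submatrix (fun a : {v : Fin (p - 1) // v ∉ S} => a.1)
      (fun b : {v : Fin (p - 1) // v ∈ S} => b.1) with hMdef
  set s : {v : Fin (p - 1) // v ∈ S} → ℝ :=
    fun b => lam * Real.sign (θstar b.1) + W b.1 with hsdef
  set u := A⁻¹ *ᵥ s with hudef
  have hθS : ∀ b : {v : Fin (p - 1) // v ∈ S}, θbar b.1 = θstar b.1 - u b := by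
    intro b; rw [hθbar]; simp [b.2]
  have hsign : ∀ v, Real.sign (θbar v) = Real.sign (θstar v) := by
    intro v
    by_cases h : v ∈ S
    · have hv := hθS ⟨v, h⟩
      rw [hv]
      exact sign_sub_of_abs_lt' (hi ⟨v, h⟩)
    · rw [hθbar]; simp [h, hsupp v h]
  have hAu : A *ᵥ u = s := by
    rw [hudef, mulVec_mulVec, Matrix.mul_nonsing_inv A hdet, one_mulVec]
  have hfun : (fun b : {v : Fin (p - 1) // v ∈ S} => θbar b.1 - θstar b.1) = -u := by
    funext b; simp [hθS b]
  refine ⟨hsign, ?_, ?_⟩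
  · intro v
    rw [hfun, Matrix.mulVec_neg, hAu, hsign v.1]
    have : s v = lam * Real.sign (θstar v.1) + W v.1 := rfl
    simp only [Pi.neg_apply, this]
    ring
  · intro v
    rw [hfun, Matrix.mulVec_neg]
    have hMu : M *ᵥ u = (M * A⁻¹) *ᵥ s := by
      rw [hudef, mulVec_mulVec]
    set B := M * A⁻¹ with hBdef
    have key : (B *ᵥ s) v = (B *ᵥ fun b => W b.1) v
        + lam * ∑ b, B v b * Real.sign (θstar b.1) := by
      simp only [mulVec, dotProduct, hsdef, Finset.mul_sum, ← Finset.sum_add_distrib]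
      apply Finset.sum_congr rfl
      intro b _; ring
    have h1 := hiii v
    have h2 : |∑ b, B v b * Real.sign (θstar b.1)| ≤ 1 - α / 2 := by
      calc |∑ b, B v b * Real.sign (θstar b.1)|
          ≤ ∑ b, |B v b * Real.sign (θstar b.1)| := Finset.abs_sum_le_sum_abs _ _
        _ ≤ ∑ b, |B v b| := Finset.sum_le_sum (fun b _ => by
            rw [abs_mul]
            exact mul_le_of_le_one_right (abs_nonneg _) (abs_real_sign_le_one _))
        _ ≤ 1 - α / 2 := hii v
    have heq : (-(M *ᵥ u)) v + W v.1
        = (W v.1 - (B *ᵥ fun b => W b.1) v) - lam * ∑ b, B v b * Real.sign (θstar b.1) := by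
      simp only [Pi.neg_apply, hMu, key]; ring
    rw [heq]
    calc |(W v.1 - (B *ᵥ fun b => W b.1) v) - lam * ∑ b, B v b * Real.sign (θstar b.1)|
        ≤ |W v.1 - (B *ᵥ fun b => W b.1) v| + |lam * ∑ b, B v b * Real.sign (θstar b.1)| := by
          rw [sub_eq_add_neg]
          exact (abs_add_le _ _).trans (by rw [abs_neg])
      _ < α / 2 * lam + lam * (1 - α / 2) := by
          have : |lam * ∑ b, B v b * Real.sign (θstar b.1)|
              = lam * |∑ b, B v b * Real.sign (θstar b.1)| := by
            rw [abs_mul, abs_of_pos hlam]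
          rw [this]
          have h2' : lam * |∑ b, B v b * Real.sign (θstar b.1)| ≤ lam * (1 - α / 2) :=
            mul_le_mul_of_nonneg_left h2 hlam.le
          linarith
      _ = lam := by ring
end
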